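/- arXiv:2603.26066 — 3 statements merged into one kernel-verified Lean document; each statement's English description precedes it below -/
import Mathlib

section
/- Let K ⊆ ℝ^d be a convex set with nonempty interior and let R be a ν-self-concordant barrier on K. Then for all x, z ∈ int(K), R(z) − R(x) ≤ ν·ln( 1/(1 − π_x(z)) ), where π_x(z) := inf{ t ≥ 0 : x + t^{-1}(z − x) ∈ K } is the Minkowski function of K with pole at x. -/
open MeasureTheory Matrix Finset Filter

/-- The Hessian matrix `∇²R(x)` of `R : ℝ^d → ℝ` at `x`, with entries given by the
second iterated Fréchet derivative evaluated at pairs of standard basis vectors. -/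
noncomputable def hessMat (d : ℕ) (R : (Fin d → ℝ) → ℝ) (x : Fin d → ℝ) :
    Matrix (Fin d) (Fin d) ℝ :=
  Matrix.of fun i j => iteratedFDeriv ℝ 2 R x ![Pi.single i 1, Pi.single j 1]

/-- The local norm `‖h‖_x := √(hᵀ ∇²R(x) h)`. -/
noncomputable def locNorm (d : ℕ) (R : (Fin d → ℝ) → ℝ) (x h : Fin d → ℝ) : ℝ :=
  Real.sqrt (h ⬝ᵥ (hessMat d R x).mulVec h)

/-- The dual local norm `‖h‖*_x := √(hᵀ (∇²R(x))⁻¹ h)`. -/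
noncomputable def dualNorm (d : ℕ) (R : (Fin d → ℝ) → ℝ) (x h : Fin d → ℝ) : ℝ :=
  Real.sqrt (h ⬝ᵥ ((hessMat d R x)⁻¹).mulVec h)

/-- `R` is a `ν`-self-concordant barrier on the convex set `K ⊆ ℝ^d`:
`R` is `C³` and convex on `int K`, blows up at the boundary of `K`, and satisfies
`|D³R(x)[h,h,h]| ≤ 2‖h‖_x³` and `|⟨∇R(x),h⟩| ≤ √ν ‖h‖_x` on `int K`. -/
def IsSCBarrier (d : ℕ) (K : Set (Fin d → ℝ)) (ν : ℝ) (R : (Fin d → ℝ) → ℝ) : Prop :=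
  ContDiffOn ℝ 3 R (interior K) ∧
    ConvexOn ℝ (interior K) R ∧
    (∀ b ∈ frontier K, Filter.Tendsto R (nhdsWithin b (interior K)) Filter.atTop) ∧
    (∀ x ∈ interior K, ∀ h : Fin d → ℝ,
      |iteratedFDeriv ℝ 3 R x ![h, h, h]| ≤ 2 * locNorm d R x h ^ 3) ∧
    (∀ x ∈ interior K, ∀ h : Fin d → ℝ,
      |fderiv ℝ R x h| ≤ Real.sqrt ν * locNorm d R x h)

/-- The shrunk set `K_δ := { x | x/(1−δ) ∈ K }`. -/
def shrink (d : ℕ) (δ : ℝ) (K : Set (Fin d → ℝ)) : Set (Fin d → ℝ) :=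
  {x | (1 - δ)⁻¹ • x ∈ K}

section Aux
open Set

lemma bilin_eq (d : ℕ) (R : (Fin d → ℝ) → ℝ) (y h : Fin d → ℝ) :
    fderiv ℝ (fderiv ℝ R) y h h = h ⬝ᵥ (hessMat d R y).mulVec h := by
  set B := fderiv ℝ (fderiv ℝ R) y with hB
  set e : Fin d → (Fin d → ℝ) := fun i => Pi.single i (1:ℝ) with he
  have hrep : h = ∑ i, h i • e i := by
    funext j
    simp [Finset.sum_apply, Pi.single_apply, he]
  have hM : ∀ i j, hessMat d R y i j = B (e i) (e j) := by
    intro i j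
    simp [hessMat, iteratedFDeriv_two_apply, hB, he]
  conv_lhs => rw [hrep]
  simp only [map_sum, ContinuousLinearMap.sum_apply, _root_.map_smul,
    ContinuousLinearMap.smul_apply, smul_eq_mul, Finset.mul_sum]
  simp only [dotProduct, Matrix.mulVec, hM, Finset.mul_sum]
  rw [Finset.sum_comm]
  exact Finset.sum_congr rfl fun i _ => Finset.sum_congr rfl fun j _ => by ring

lemma line_hasDerivAt {d : ℕ} {Ω : Set (Fin d → ℝ)} (hΩ : IsOpen Ω)
    {R : (Fin d → ℝ) → ℝ} (hC : ContDiffOn ℝ 3 R Ω)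
    (a h : Fin d → ℝ) (t : ℝ) (hy : a + t • h ∈ Ω) :
    HasDerivAt (fun s => R (a + s • h)) (fderiv ℝ R (a + t • h) h) t ∧
      HasDerivAt (fun s => fderiv ℝ R (a + s • h) h)
        (h ⬝ᵥ (hessMat d R (a + t • h)).mulVec h) t := by
  set y := a + t • h with hy'
  have hca : ContDiffAt ℝ 3 R y := hC.contDiffAt (hΩ.mem_nhds hy)
  have hγ : HasDerivAt (fun s : ℝ => a + s • h) h t := by
    simpa using ((hasDerivAt_id t).smul_const h).const_add a
  have h1 : HasDerivAt (fun s => R (a + s • h)) (fderiv ℝ R y h) t := by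
    have hdR : HasFDerivAt R (fderiv ℝ R y) y :=
      (hca.differentiableAt (by norm_num)).hasFDerivAt
    exact hdR.comp_hasDerivAt t hγ
  refine ⟨h1, ?_⟩
  have hca2 : ContDiffAt ℝ 2 (fderiv ℝ R) y := hca.fderiv_right (by norm_num)
  have hdF : HasFDerivAt (fderiv ℝ R) (fderiv ℝ (fderiv ℝ R) y) y :=
    (hca2.differentiableAt (by norm_num)).hasFDerivAt
  have h2 : HasDerivAt (fun s => fderiv ℝ R (a + s • h))
      (fderiv ℝ (fderiv ℝ R) y h) t := hdF.comp_hasDerivAt t hγ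
  have h3 := h2.clm_apply (hasDerivAt_const t h)
  simpa [bilin_eq] using h3

lemma deriv_nonneg_of_monotoneOn {f : ℝ → ℝ} {a b t q : ℝ}
    (hm : MonotoneOn f (Set.Ico a b)) (ht : t ∈ Set.Ioo a b)
    (hd : HasDerivAt f q t) : 0 ≤ q := by
  have hs : Tendsto (slope f t) (nhdsWithin t (Set.Ioi t)) (nhds q) :=
    (hasDerivAt_iff_tendsto_slope.mp hd).mono_left
      (nhdsWithin_mono t (fun s hs => Set.mem_compl_singleton_iff.mpr (ne_of_gt hs)))
  refine ge_of_tendsto hs ?_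
  filter_upwards [Ioo_mem_nhdsGT_of_mem ⟨le_refl t, ht.2⟩] with s hs'
  rw [slope_def_field]
  have h1 : f t ≤ f s :=
    hm ⟨ht.1.le, ht.2⟩ ⟨ht.1.le.trans hs'.1.le, hs'.2⟩ hs'.1.le
  have h2 : 0 < s - t := sub_pos.mpr hs'.1
  exact div_nonneg (sub_nonneg.mpr h1) h2.le

lemma grad_bound {d : ℕ} {K : Set (Fin d → ℝ)} (hKconv : Convex ℝ K)
    {ν : ℝ} (hν : 1 ≤ ν) {R : (Fin d → ℝ) → ℝ} (hR : IsSCBarrier d K ν R)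
    {u v : Fin d → ℝ} (hu : u ∈ interior K) (hv : v ∈ K) :
    fderiv ℝ R u (v - u) ≤ ν := by
  obtain ⟨hC, hconv, -, -, hgrad⟩ := hR
  set h : Fin d → ℝ := v - u with hh
  have hmem : ∀ s ∈ Set.Ico (0:ℝ) 1, u + s • h ∈ interior K := by
    intro s hs
    have he : u + s • h = (1 - s) • u + s • v := by
      rw [hh]; module
    rw [he]
    exact hKconv.combo_interior_closure_mem_interior hu (subset_closure hv)
      (by linarith [hs.2]) hs.1 (by ring)
  set φ : ℝ → ℝ := fun s => fderiv ℝ R (u + s • h) h with hφ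
  set q : ℝ → ℝ := fun s => h ⬝ᵥ (hessMat d R (u + s • h)).mulVec h with hq
  have hD : ∀ s ∈ Set.Ico (0:ℝ) 1,
      HasDerivAt (fun r => R (u + r • h)) (φ s) s ∧ HasDerivAt φ (q s) s :=
    fun s hs => line_hasDerivAt isOpen_interior hC u h s (hmem s hs)
  have hgconv : ConvexOn ℝ (Set.Ico (0:ℝ) 1) (fun s => R (u + s • h)) := by
    refine ⟨convex_Ico 0 1, ?_⟩
    intro s1 hs1 s2 hs2 a b ha hb hab
    have hkey := hconv.2 (hmem s1 hs1) (hmem s2 hs2) ha hb hab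
    have he : u + (a • s1 + b • s2) • h = a • (u + s1 • h) + b • (u + s2 • h) := by
      have : a • (u + s1 • h) + b • (u + s2 • h) = (a + b) • u + (a * s1 + b * s2) • h := by
        module
      rw [this, hab, one_smul, smul_eq_mul, smul_eq_mul]
    show R (u + (a • s1 + b • s2) • h) ≤ a • R (u + s1 • h) + b • R (u + s2 • h)
    rw [he]
    exact hkey
  have hmono : MonotoneOn φ (Set.Ico (0:ℝ) 1) := by
    have hm := hgconv.monotoneOn_deriv (fun s hs => ((hD s hs).1).differentiableAt)
    intro s1 hs1 s2 hs2 hle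
    have e1 : φ s1 = deriv (fun r => R (u + r • h)) s1 := ((hD s1 hs1).1).deriv.symm
    have e2 : φ s2 = deriv (fun r => R (u + r • h)) s2 := ((hD s2 hs2).1).deriv.symm
    rw [e1, e2]
    exact hm hs1 hs2 hle
  have hq0 : ∀ s ∈ Set.Ioo (0:ℝ) 1, 0 ≤ q s :=
    fun s hs => deriv_nonneg_of_monotoneOn hmono hs ((hD s ⟨hs.1.le, hs.2⟩).2)
  have hν0 : (0:ℝ) < ν := by linarith
  have hφb : ∀ s ∈ Set.Ioo (0:ℝ) 1, (φ s)^2 ≤ ν * q s := by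
    intro s hs
    have h1 := hgrad (u + s • h) (hmem s ⟨hs.1.le, hs.2⟩) h
    have h2 : locNorm d R (u + s • h) h = Real.sqrt (q s) := rfl
    rw [h2] at h1
    calc (φ s)^2 = |φ s|^2 := (sq_abs _).symm
      _ ≤ (Real.sqrt ν * Real.sqrt (q s))^2 := pow_le_pow_left₀ (abs_nonneg _) h1 2
      _ = ν * q s := by
          rw [mul_pow, Real.sq_sqrt hν0.le, Real.sq_sqrt (hq0 s hs)]
  by_contra hcon
  push_neg at hcon
  have hcon' : ν < φ 0 := by
    simp only [hφ, zero_smul, add_zero]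
    exact hcon
  have hφ0 : 0 < φ 0 := lt_trans hν0 hcon'
  set T := ν / φ 0 with hT
  have hT0 : 0 < T := div_pos hν0 hφ0
  have hT1 : T < 1 := (div_lt_one hφ0).mpr hcon'
  have hlb : ∀ s ∈ Set.Icc (0:ℝ) T, φ 0 ≤ φ s := fun s hs =>
    hmono ⟨le_refl 0, one_pos⟩ ⟨hs.1, lt_of_le_of_lt hs.2 hT1⟩ hs.1
  have hψd : ∀ s ∈ Set.Icc (0:ℝ) T,
      HasDerivAt (fun r => r + ν / φ r) (1 + (0 * φ s - ν * q s) / (φ s)^2) s := by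
    intro s hs
    have hsI : s ∈ Set.Ico (0:ℝ) 1 := ⟨hs.1, lt_of_le_of_lt hs.2 hT1⟩
    have hφpos : 0 < φ s := lt_of_lt_of_le hφ0 (hlb s hs)
    exact (hasDerivAt_id s).add
      (((hasDerivAt_const s ν).div ((hD s hsI).2) (ne_of_gt hφpos)))
  have hanti : AntitoneOn (fun r => r + ν / φ r) (Set.Icc 0 T) := by
    apply antitoneOn_of_deriv_nonpos (convex_Icc 0 T)
    · exact fun s hs => (hψd s hs).continuousAt.continuousWithinAt
    · intro s hs
      rw [interior_Icc] at hs
      exact ((hψd s ⟨hs.1.le, hs.2.le⟩).differentiableAt).differentiableWithinAt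
    · intro s hs
      rw [interior_Icc] at hs
      rw [(hψd s ⟨hs.1.le, hs.2.le⟩).deriv]
      have hφpos : 0 < φ s := lt_of_lt_of_le hφ0 (hlb s ⟨hs.1.le, hs.2.le⟩)
      have hsI : s ∈ Set.Ioo (0:ℝ) 1 := ⟨hs.1, lt_trans hs.2 hT1⟩
      have hb := hφb s hsI
      have hsq : 0 < (φ s)^2 := pow_pos hφpos 2
      have h1 : 1 ≤ ν * q s / (φ s)^2 := (le_div_iff₀ hsq).mpr (by linarith)
      have h2 : (0 * φ s - ν * q s) / (φ s)^2 = -(ν * q s / (φ s)^2) := by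
        rw [zero_mul, zero_sub, neg_div]
      rw [h2]
      linarith
  have hle := hanti (Set.left_mem_Icc.mpr hT0.le) (Set.right_mem_Icc.mpr hT0.le) hT0.le
  simp only at hle
  have hφT : 0 < φ T := lt_of_lt_of_le hφ0 (hlb T (Set.right_mem_Icc.mpr hT0.le))
  have hpos : 0 < ν / φ T := div_pos hν0 hφT
  rw [zero_add, ← hT] at hle
  linarith

end Aux


/-- **Logarithmic growth of a self-concordant barrier (Lemma 2).**
If `R` is a `ν`-self-concordant barrier on the convex set `K` with nonempty interior,
then for all `x, z ∈ int K`, `R z − R x ≤ ν ln(1/(1 − π_x(z)))`, where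
`π_x(z) = inf { t > 0 : x + t⁻¹(z−x) ∈ K }` is the Minkowski function of `K`
with pole at `x`. -/
theorem barrier_log_growth (d : ℕ) (K : Set (Fin d → ℝ)) (hKconv : Convex ℝ K)
    (hKint : (interior K).Nonempty) (ν : ℝ) (hν : 1 ≤ ν)
    (R : (Fin d → ℝ) → ℝ) (hR : IsSCBarrier d K ν R)
    (x : Fin d → ℝ) (hx : x ∈ interior K) (z : Fin d → ℝ) (hz : z ∈ interior K) :
    R z - R x ≤
      ν * Real.log (1 / (1 - sInf {t : ℝ | 0 < t ∧ x + t⁻¹ • (z - x) ∈ K})) := by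
  set S : Set ℝ := {t : ℝ | 0 < t ∧ x + t⁻¹ • (z - x) ∈ K} with hS
  set π := sInf S with hπ
  have hν0 : (0:ℝ) < ν := by linarith
  have h1S : (1:ℝ) ∈ S := by
    refine ⟨one_pos, ?_⟩
    rw [inv_one, one_smul]
    have he : x + (z - x) = z := by module
    rw [he]; exact interior_subset hz
  have hSne : S.Nonempty := ⟨1, h1S⟩
  have hbdd : BddBelow S := ⟨0, fun t ht => ht.1.le⟩
  have hπ0 : 0 ≤ π := le_csInf hSne fun t ht => ht.1.le
  have hπlt : ∃ σ ∈ S, σ < 1 := by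
    by_cases hzx : z = x
    · refine ⟨1/2, ⟨by norm_num, ?_⟩, by norm_num⟩
      rw [hzx]
      simpa using interior_subset hx
    · obtain ⟨ε, hε, hball⟩ := Metric.isOpen_iff.mp isOpen_interior z hz
      have hzx' : 0 < ‖z - x‖ := by
        rw [norm_pos_iff]; exact sub_ne_zero.mpr hzx
      set δ := ε / (2 * ‖z - x‖) with hδdef
      have hδ : 0 < δ := div_pos hε (by positivity)
      refine ⟨(1 + δ)⁻¹, ⟨inv_pos.mpr (by linarith), ?_⟩, ?_⟩
      · have he : x + ((1+δ)⁻¹)⁻¹ • (z - x) = z + δ • (z - x) := by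
          rw [inv_inv]
          module
        rw [he]
        apply interior_subset
        apply hball
        rw [Metric.mem_ball, dist_eq_norm]
        have he2 : z + δ • (z - x) - z = δ • (z - x) := by module
        rw [he2, norm_smul, Real.norm_eq_abs, abs_of_pos hδ]
        have he3 : δ * ‖z - x‖ = ε / 2 := by
          rw [hδdef]; field_simp
        rw [he3]; linarith
      · rw [inv_lt_one₀ (by linarith)]; linarith
  obtain ⟨σ₀, hσ₀S, hσ₀1⟩ := hπlt
  have hπ1 : π < 1 := lt_of_le_of_lt (csInf_le hbdd hσ₀S) hσ₀1
  have hIntConv : Convex ℝ (interior K) := hKconv.interior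
  have hmem : ∀ t ∈ Set.Icc (0:ℝ) 1, x + t • (z - x) ∈ interior K := by
    intro t ht
    have he : x + t • (z - x) = (1 - t) • x + t • z := by module
    rw [he]
    exact hIntConv hx hz (by linarith [ht.2]) ht.1 (by ring)
  have hC : ContDiffOn ℝ 3 R (interior K) := hR.1
  set φ : ℝ → ℝ := fun t => fderiv ℝ R (x + t • (z - x)) (z - x) with hφ
  have hkey : ∀ t ∈ Set.Icc (0:ℝ) 1, φ t * (1 - π * t) ≤ ν * π := by
    intro t ht
    have hstep : ∀ σ ∈ S, σ < 1 → φ t * (1 - σ * t) ≤ ν * σ := by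
      intro σ hσ hσ1
      have hσ0 : (0:ℝ) < σ := hσ.1
      have hub := grad_bound hKconv hν hR (hmem t ht) hσ.2
      have he : (x + σ⁻¹ • (z - x)) - (x + t • (z - x)) = (σ⁻¹ - t) • (z - x) := by
        module
      rw [he, ContinuousLinearMap.map_smul, smul_eq_mul] at hub
      have h2 : σ * ((σ⁻¹ - t) * φ t) ≤ σ * ν := mul_le_mul_of_nonneg_left hub hσ0.le
      have h3 : σ * (σ⁻¹ - t) = 1 - σ * t := by field_simp
      have h4 : φ t * (1 - σ * t) = σ * ((σ⁻¹ - t) * φ t) := by rw [← h3]; ring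
      rw [h4]; linarith
    set c := ν + t * φ t with hc
    have hL : ∀ σ ∈ S, σ < 1 → 0 ≤ c * σ - φ t := by
      intro σ hσ hσ1
      have h5 := hstep σ hσ hσ1
      nlinarith [h5]
    have hfinal : 0 ≤ c * π - φ t := by
      by_contra hneg
      push_neg at hneg
      set A := c * π - φ t with hA
      have hCpos : (0:ℝ) < |c| + 1 := by positivity
      set ε := min (-A / (|c| + 1)) (1 - π) with hε'
      have hε : 0 < ε := lt_min (div_pos (neg_pos.mpr hneg) hCpos) (by linarith)
      obtain ⟨σ, hσS, hσlt⟩ := exists_lt_of_csInf_lt hSne (show sInf S < π + ε by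
        rw [← hπ]; linarith)
      have hσ1 : σ < 1 := by
        have := min_le_right (-A / (|c| + 1)) (1 - π)
        have hεle : ε ≤ 1 - π := this
        linarith
      have h5 := hL σ hσS hσ1
      have hσπ : π ≤ σ := csInf_le hbdd hσS
      have h6 : c * (σ - π) ≤ |c| * ε := by
        calc c * (σ - π) ≤ |c| * (σ - π) :=
              mul_le_mul_of_nonneg_right (le_abs_self c) (by linarith)
          _ ≤ |c| * ε := mul_le_mul_of_nonneg_left (by linarith) (abs_nonneg c)
      have h7 : |c| * ε ≤ |c| * (-A / (|c| + 1)) :=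
        mul_le_mul_of_nonneg_left (min_le_left _ _) (abs_nonneg c)
      have h8 : |c| * (-A / (|c| + 1)) < -A := by
        rw [mul_div_assoc', div_lt_iff₀ hCpos]
        nlinarith [abs_nonneg c, neg_pos.mpr hneg]
      have h9 : c * σ - φ t = A + c * (σ - π) := by rw [hA]; ring
      linarith
    nlinarith [hfinal]
  have hπt : ∀ t ∈ Set.Icc (0:ℝ) 1, 0 < 1 - π * t := by
    intro t ht
    nlinarith [ht.1, ht.2]
  have hD : ∀ t ∈ Set.Icc (0:ℝ) 1,
      HasDerivAt (fun r => R (x + r • (z - x))) (φ t) t :=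
    fun t ht => (line_hasDerivAt isOpen_interior hC x (z - x) t (hmem t ht)).1
  have hlogD : ∀ t ∈ Set.Icc (0:ℝ) 1,
      HasDerivAt (fun r => Real.log (1 - π * r)) (-π / (1 - π * t)) t := by
    intro t ht
    have hin : HasDerivAt (fun r : ℝ => 1 - π * r) (-π) t := by
      simpa using ((hasDerivAt_id t).const_mul π).const_sub 1
    have h2 := (Real.hasDerivAt_log (ne_of_gt (hπt t ht))).comp t hin
    simpa [Function.comp_def, div_eq_mul_inv, mul_comm] using h2
  have hGd : ∀ t ∈ Set.Icc (0:ℝ) 1,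
      HasDerivAt (fun r => R (x + r • (z - x)) + ν * Real.log (1 - π * r))
        (φ t + ν * (-π / (1 - π * t))) t :=
    fun t ht => (hD t ht).add ((hlogD t ht).const_mul ν)
  have hG : AntitoneOn (fun t => R (x + t • (z - x)) + ν * Real.log (1 - π * t))
      (Set.Icc 0 1) := by
    apply antitoneOn_of_deriv_nonpos (convex_Icc 0 1)
    · exact fun t ht => (hGd t ht).continuousAt.continuousWithinAt
    · intro t ht
      rw [interior_Icc] at ht
      exact ((hGd t ⟨ht.1.le, ht.2.le⟩).differentiableAt).differentiableWithinAt
    · intro t ht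
      rw [interior_Icc] at ht
      have ht' : t ∈ Set.Icc (0:ℝ) 1 := ⟨ht.1.le, ht.2.le⟩
      rw [(hGd t ht').deriv]
      have h1 := hkey t ht'
      have h2 := hπt t ht'
      have h3 : φ t ≤ ν * π / (1 - π * t) := by
        rw [le_div_iff₀ h2]; linarith
      have h4 : ν * (-π / (1 - π * t)) = -(ν * π / (1 - π * t)) := by ring
      rw [h4]; linarith
  have hfin := hG (Set.left_mem_Icc.mpr zero_le_one) (Set.right_mem_Icc.mpr zero_le_one)
    zero_le_one
  simp only at hfin
  have e1 : x + (1:ℝ) • (z - x) = z := by module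
  have e0 : x + (0:ℝ) • (z - x) = x := by module
  rw [e1, e0] at hfin
  simp only [mul_one, mul_zero, sub_zero, Real.log_one] at hfin
  have hlog : Real.log (1 / (1 - π)) = - Real.log (1 - π) := by
    rw [one_div, Real.log_inv]
  rw [hlog]
  linarith
end

section
/- Let K ⊆ ℝ^d be a convex set containing the unit Euclidean ball (in particular K is infinite), let ε > 0 and T ∈ ℕ. Consider any deterministic black-box optimization algorithm, specified by query maps a_t : ℝ^{t−1} → K for t = 1,…,T and an output map a_out : ℝ^T → K; for a function f : K → ℝ, define recursively x_t(f) := a_t( f(x_1(f)), …, f(x_{t−1}(f)) ) and x̂(f) := a_out( f(x_1(f)), …, f(x_T(f)) ). Then there exists an ε-approximately linear function f : K → ℝ (indeed with linear part θ_f = 0, i.e. |f(x)| ≤ ε for all x ∈ K) such that f(x̂(f)) − min_{x∈K} f(x) ≥ 2ε, where the minimum is attained. -/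
open Matrix Finset

/-- **Black-box lower bound, deterministic case (Lemma 9).**
Let `K ⊆ ℝ^d` (`d ≥ 1`) be convex and contain the unit Euclidean ball, `ε > 0` and
`T ∈ ℕ`.  Consider a deterministic black-box algorithm given by query maps
`a t : ℝ^{t−1} → K` (depending only on the previously observed values) and an output
map `aout : ℝ^T → K`, with trajectory `X f t = a t (f(X f 1), …, f(X f (t−1)))` and
output `Xout f = aout (f(X f 1), …, f(X f T))`.  Then there is an `ε`-approximately
linear function `f` — indeed with linear part `θ_f = 0`, i.e. `|f| ≤ ε` on `K` —
whose minimum over `K` is attained and with `f(Xout f) − min_{x∈K} f(x) ≥ 2ε`. -/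
theorem blackbox_lower_bound_deterministic (d T : ℕ) (hd : 1 ≤ d)
    (K : Set (Fin d → ℝ)) (hKconv : Convex ℝ K)
    (hKball : ∀ z : Fin d → ℝ, (∑ i, z i ^ 2) ≤ 1 → z ∈ K)
    (ε : ℝ) (hε : 0 < ε)
    (a : ℕ → (ℕ → ℝ) → (Fin d → ℝ))
    (ha_mem : ∀ t v, a t v ∈ K)
    (ha_dep : ∀ t v w, (∀ τ, 1 ≤ τ → τ < t → v τ = w τ) → a t v = a t w)
    (aout : (ℕ → ℝ) → (Fin d → ℝ))
    (haout_mem : ∀ v, aout v ∈ K)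
    (haout_dep : ∀ v w, (∀ τ, 1 ≤ τ → τ ≤ T → v τ = w τ) → aout v = aout w)
    (X : ((Fin d → ℝ) → ℝ) → ℕ → (Fin d → ℝ))
    (hX : ∀ f t, X f t = a t fun τ => f (X f τ))
    (Xout : ((Fin d → ℝ) → ℝ) → (Fin d → ℝ))
    (hXout : ∀ f, Xout f = aout fun τ => f (X f τ)) :
    ∃ f : (Fin d → ℝ) → ℝ, (∀ z ∈ K, |f z| ≤ ε) ∧
      ∃ xm ∈ K, (∀ z ∈ K, f xm ≤ f z) ∧ 2 * ε ≤ f (Xout f) - f xm := by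
  classical
  set g : (Fin d → ℝ) → ℝ := fun _ => ε with hg
  set S : Finset (Fin d → ℝ) := ((Finset.Icc 1 T).image (X g)) ∪ {Xout g} with hS
  -- an infinite subset of K
  set i0 : Fin d := ⟨0, hd⟩ with hi0
  set φ : ℝ → (Fin d → ℝ) := fun c => fun i => if i = i0 then c else 0 with hφ
  have hφinj : Function.Injective φ := by
    intro b c hbc
    have := congrFun hbc i0
    simpa [hφ] using this
  have hφK : ∀ c ∈ Set.Icc (0:ℝ) 1, φ c ∈ K := by
    intro c hc
    apply hKball
    have : ∀ i : Fin d, (φ c i) ^ 2 = if i = i0 then c ^ 2 else 0 := by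
      intro i; by_cases h : i = i0 <;> simp [hφ, h]
    rw [Finset.sum_congr rfl fun i _ => this i]
    rw [Finset.sum_ite_eq' Finset.univ i0 (fun _ => c ^ 2)]
    simp only [Finset.mem_univ, if_true]
    nlinarith [hc.1, hc.2]
  have hinf : (φ '' Set.Icc (0:ℝ) 1).Infinite :=
    (Set.Icc_infinite (show (0:ℝ) < 1 by norm_num)).image (hφinj.injOn)
  obtain ⟨z, hzmem, hznot⟩ := hinf.exists_notMem_finset S
  obtain ⟨c, hc, rfl⟩ := hzmem
  have hzK : φ c ∈ K := hφK c hc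
  set z := φ c with hz
  set f : (Fin d → ℝ) → ℝ := fun x => if x = z then -ε else ε with hf
  -- key: X f t = X g t for all t ≤ T
  have hXgz : ∀ τ, 1 ≤ τ → τ ≤ T → X g τ ≠ z := by
    intro τ h1 h2 heq
    apply hznot
    rw [hS]
    exact Finset.mem_union_left _ (Finset.mem_image.2 ⟨τ, Finset.mem_Icc.2 ⟨h1, h2⟩, heq⟩)
  have key : ∀ t, t ≤ T → X f t = X g t := by
    intro t
    induction t using Nat.strong_induction_on with
    | _ t ih =>
      intro ht
      rw [hX f t, hX g t]
      apply ha_dep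
      intro τ h1 h2
      rw [ih τ h2 (le_trans (le_of_lt h2) ht)]
      simp only [hf, hg]
      rw [if_neg (hXgz τ h1 (le_trans (le_of_lt h2) ht))]
  have hout : Xout f = Xout g := by
    rw [hXout f, hXout g]
    apply haout_dep
    intro τ h1 h2
    rw [key τ h2]
    simp only [hf, hg]
    rw [if_neg (hXgz τ h1 h2)]
  have houtz : Xout f ≠ z := by
    rw [hout]
    intro heq
    apply hznot
    rw [hS]
    exact Finset.mem_union_right _ (by simp [heq])
  refine ⟨f, ?_, z, hzK, ?_, ?_⟩
  · intro x _
    simp only [hf]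
    by_cases h : x = z <;> simp [h, abs_of_pos hε, abs_neg]
  · intro x _
    simp only [hf, if_pos rfl]
    by_cases h : x = z <;> simp [h] <;> linarith
  · rw [show f (Xout f) = ε from if_neg houtz, show f z = -ε from if_pos rfl]
    linarith
end

section
/- Let K ⊆ ℝ^d be a convex set containing the unit Euclidean ball, let T ≥ 1 and C > 0. Consider any deterministic player strategy for bandit optimization over T rounds, specified by maps p_t : ℝ^{t−1} → K selecting the action x_t from the previously observed loss values; given loss functions f_1,…,f_T : K → ℝ, define recursively x_t := p_t( f_1(x_1), …, f_{t−1}(x_{t−1}) ). Then there exists a C-approximately linear sequence f_1, …, f_T of loss functions on K (in fact one can take all f_t equal to a single ε-approximately linear function with ε = C/T) such that Σ_{t=1}^{T} f_t(x_t) − min_{x∈K} Σ_{t=1}^{T} f_t(x) ≥ 2C, where the minimum is attained. -/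
open Matrix Finset

/-- **Regret lower bound `Ω(C)` (final Theorem, Section 6).**
Let `K ⊆ ℝ^d` (`d ≥ 1`) be convex and contain the unit Euclidean ball, `T ≥ 1` and
`C > 0`.  Consider any deterministic player given by maps `p t : ℝ^{t−1} → K`
(depending only on the previously observed loss values), with trajectory
`x_t = p t (f_1(x_1), …, f_{t−1}(x_{t−1}))`.  Then there exists a `C`-approximately
linear sequence of losses `F_1, …, F_T` — in fact all equal to a single
`ε`-approximately linear function with `ε = C/T` — whose cumulative minimum over `K`
is attained and such that `Σ_t F_t(x_t) − min_{x∈K} Σ_t F_t(x) ≥ 2C`. -/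
theorem bandit_regret_lower_bound (d T : ℕ) (hd : 1 ≤ d) (hT : 1 ≤ T)
    (C : ℝ) (hC : 0 < C)
    (K : Set (Fin d → ℝ)) (hKconv : Convex ℝ K)
    (hKball : ∀ z : Fin d → ℝ, (∑ i, z i ^ 2) ≤ 1 → z ∈ K)
    (p : ℕ → (ℕ → ℝ) → (Fin d → ℝ))
    (hp_mem : ∀ t v, p t v ∈ K)
    (hp_dep : ∀ t v w, (∀ τ, 1 ≤ τ → τ < t → v τ = w τ) → p t v = p t w)
    (X : (ℕ → (Fin d → ℝ) → ℝ) → ℕ → (Fin d → ℝ))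
    (hX : ∀ F t, X F t = p t fun τ => F τ (X F τ)) :
    ∃ F : ℕ → (Fin d → ℝ) → ℝ,
      (∃ θ : ℕ → Fin d → ℝ, ∀ z : ℕ → Fin d → ℝ, (∀ t, z t ∈ K) →
        ∑ t ∈ Icc 1 T, |F t (z t) - θ t ⬝ᵥ z t| ≤ C) ∧
      (∃ f0 : (Fin d → ℝ) → ℝ, (∀ t, F t = f0) ∧
        ∃ θ0 : Fin d → ℝ, ∀ z ∈ K, |f0 z - θ0 ⬝ᵥ z| ≤ C / T) ∧
      ∃ xm ∈ K,
        (∀ z ∈ K, ∑ t ∈ Icc 1 T, F t xm ≤ ∑ t ∈ Icc 1 T, F t z) ∧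
        2 * C ≤ ∑ t ∈ Icc 1 T, F t (X F t) - ∑ t ∈ Icc 1 T, F t xm := by
  have hT0 : (0:ℝ) < T := by exact_mod_cast hT
  set ε : ℝ := C / T with hε
  have hε0 : 0 < ε := div_pos hC hT0
  have hTε : (T:ℝ) * ε = C := by rw [hε, mul_div_assoc']; exact mul_div_cancel_left₀ C hT0.ne'
  set i0 : Fin d := ⟨0, hd⟩ with hi0
  set y : ℕ → Fin d → ℝ := fun t => p t (fun _ => ε) with hy
  set S : Finset (Fin d → ℝ) := (Icc 1 T).image y with hS
  have hinj : Set.InjOn (fun c : ℝ => (fun i : Fin d => if i = i0 then c else 0))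
      (Set.Icc 0 1) := by
    intro a _ b _ h
    simpa using congrFun h i0
  have hinf2 : ((fun c : ℝ => (fun i : Fin d => if i = i0 then c else 0)) ''
      (Set.Icc 0 1)).Infinite := (Set.Icc_infinite zero_lt_one).image hinj
  obtain ⟨xm, hxm_mem, hxm_not⟩ := hinf2.exists_notMem_finset S
  obtain ⟨c, hc, hcx⟩ := hxm_mem
  have hxmK : xm ∈ K := by
    apply hKball
    rw [← hcx]
    have hsum : ∑ i, (if i = i0 then c else (0:ℝ)) ^ 2 = c ^ 2 := by
      simp [apply_ite (fun x : ℝ => x ^ 2)]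
    simp only [hsum]
    nlinarith [hc.1, hc.2]
  set f0 : (Fin d → ℝ) → ℝ := fun z => if z = xm then -ε else ε with hf0
  set F : ℕ → (Fin d → ℝ) → ℝ := fun _ => f0 with hF
  have hyne : ∀ τ, 1 ≤ τ → τ ≤ T → y τ ≠ xm := by
    intro τ h1 h2 h
    exact hxm_not (h ▸ Finset.mem_image_of_mem y (Finset.mem_Icc.mpr ⟨h1, h2⟩))
  have hkey : ∀ t, t ≤ T → X F t = y t := by
    intro t
    induction t using Nat.strong_induction_on with
    | _ t IH =>
      intro ht
      rw [hX, hy]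
      apply hp_dep
      intro τ h1 h2
      have hτT : τ ≤ T := le_trans (le_of_lt h2) ht
      rw [IH τ h2 hτT]
      simp only [hF, hf0]
      rw [if_neg (hyne τ h1 hτT)]
  have habs : ∀ z : Fin d → ℝ, |f0 z| = ε := by
    intro z
    simp only [hf0]
    split <;> simp [abs_of_pos hε0, abs_of_neg (neg_neg_iff_pos.mpr hε0)]
  have hFxm : f0 xm = -ε := by simp [hf0]
  have hFtraj : ∀ t ∈ Icc 1 T, f0 (X F t) = ε := by
    intro t ht
    rw [Finset.mem_Icc] at ht
    rw [hkey t ht.2]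
    simp only [hf0]
    rw [if_neg (hyne t ht.1 ht.2)]
  have hcard : ((Icc 1 T).card : ℝ) = T := by
    rw [Nat.card_Icc]; simp
  refine ⟨F, ⟨fun _ => 0, ?_⟩, ⟨f0, fun _ => rfl, 0, ?_⟩, xm, hxmK, ?_, ?_⟩
  · intro z hz
    have : ∀ t ∈ Icc 1 T, |F t (z t) - (0 : Fin d → ℝ) ⬝ᵥ z t| = ε := by
      intro t ht; simp [hF, habs]
    rw [Finset.sum_congr rfl this, Finset.sum_const, nsmul_eq_mul, hcard, hTε]
  · intro z hz
    simp [habs z, hε]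
  · intro z hz
    apply Finset.sum_le_sum
    intro t ht
    simp only [hF, hFxm]
    have := habs z
    cases abs_le.mp (le_of_eq this) with
    | intro h1 h2 => linarith
  · rw [Finset.sum_congr rfl hFtraj]
    have : ∑ _t ∈ Icc 1 T, F _t xm = (Icc 1 T).card • (-ε) := by
      simp [hF, hFxm]
    rw [this, Finset.sum_const, nsmul_eq_mul, nsmul_eq_mul, hcard, hTε]
    linarith
end
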